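/- With g^{a,r} the standard inclusion (r ≥ 0) or collapse (r ≤ 0) maps between the modules L^a and L^{a+r}, one has: whenever a + r ≥ 0, g^{a,r} ∘ g^{a+r,−r} = (1 − t)^{|r|} as an endomorphism of L^{a+r}. -/
import Mathlib


open Matrix

/-- The unipotent Jordan block matrix: `1`'s on the diagonal, `-1`'s on the superdiagonal. -/
def JordanBlock (k : Type*) [Field k] (a : ℕ) : Matrix (Fin a) (Fin a) k :=
  fun i j => if i = j then 1 else if (i : ℕ) + 1 = (j : ℕ) then -1 else 0

/-- The monodromy action of `t` on `L^a = k^a`, by the unipotent Jordan block. -/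
noncomputable def tAct (k : Type*) [Field k] (a : ℕ) :
    (Fin a → k) →ₗ[k] (Fin a → k) :=
  Matrix.mulVecLin (JordanBlock k a)

/-- The map `g^{m, n-m}` (for `m ≤ n`): inclusion of `L^m` onto the first `m`
coordinates of `L^n`. -/
def inclL (k : Type*) [Field k] (m n : ℕ) : (Fin m → k) →ₗ[k] (Fin n → k) where
  toFun x i := if h : (i : ℕ) < m then x ⟨i, h⟩ else 0
  map_add' x y := by funext i; by_cases h : (i : ℕ) < m <;> simp [h]
  map_smul' c x := by funext i; by_cases h : (i : ℕ) < m <;> simp [h]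

/-- The map `g^{m, -(m-n)}` (for `n ≤ m`): collapse of the first `m - n`
coordinates of `L^m`, onto `L^n`. -/
def collL (k : Type*) [Field k] (m n : ℕ) (h : n ≤ m) : (Fin m → k) →ₗ[k] (Fin n → k) :=
  LinearMap.funLeft k k (fun i : Fin n => (⟨m - n + (i : ℕ), by have := i.isLt; omega⟩ : Fin m))

lemma tAct_apply (k : Type*) [Field k] (n : ℕ) (x : Fin n → k) (i : Fin n) :
    tAct k n x i = x i - (if h : (i : ℕ) + 1 < n then x ⟨i + 1, h⟩ else 0) := by
  simp only [tAct, Matrix.mulVecLin_apply, Matrix.mulVec, dotProduct, JordanBlock]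
  have : ∀ j : Fin n,
      (if i = j then (1:k) else if (i : ℕ) + 1 = (j : ℕ) then -1 else 0) * x j =
      (if j = i then x i else 0) +
      (if h : (i : ℕ) + 1 < n then (if j = ⟨i + 1, h⟩ then -x j else 0) else 0) := by
    intro j
    by_cases h : (i : ℕ) + 1 < n
    · by_cases h1 : j = i
      · subst h1; simp [Fin.ext_iff, h]
      · by_cases h2 : j = ⟨i + 1, h⟩
        · subst h2; simp [Fin.ext_iff, h]
        · have : ¬ i = j := fun hh => h1 hh.symm
          simp [this, h1, h2, h]
          intro hc
          exact absurd (Fin.ext hc.symm) h2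
    · by_cases h1 : j = i
      · subst h1; simp [h]
      · have : ¬ i = j := fun hh => h1 hh.symm
        have h3 : ¬ ((i : ℕ) + 1 = (j : ℕ)) := by
          intro hc; exact h (hc ▸ j.isLt)
        simp [this, h1, h3, h]
  rw [Finset.sum_congr rfl (fun j _ => this j), Finset.sum_add_distrib]
  rw [Finset.sum_ite_eq' Finset.univ i (fun _ => x i)]
  simp only [Finset.mem_univ, if_true]
  by_cases h : (i : ℕ) + 1 < n
  · simp only [h, dif_pos]
    rw [Finset.sum_ite_eq' Finset.univ (⟨(i : ℕ) + 1, h⟩ : Fin n) (fun j => -x j)]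
    simp [sub_eq_add_neg]
  · simp [h]

lemma shift_pow (k : Type*) [Field k] (n r : ℕ) (x : Fin n → k) (i : Fin n) :
    ((1 - tAct k n) ^ r) x i =
      if h : (i : ℕ) + r < n then x ⟨(i : ℕ) + r, h⟩ else 0 := by
  induction r generalizing x with
  | zero => simp [i.isLt]
  | succ r ih =>
    rw [pow_succ]
    have : ((1 - tAct k n) ^ r * (1 - tAct k n)) x = ((1 - tAct k n) ^ r) ((1 - tAct k n) x) :=
      rfl
    rw [this, ih]
    have hone : ∀ (y : Fin n → k) (j : Fin n),
        (1 - tAct k n) y j = if h : (j : ℕ) + 1 < n then y ⟨j + 1, h⟩ else 0 := by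
      intro y j
      have := tAct_apply k n y j
      simp only [LinearMap.sub_apply, Module.End.one_apply, Pi.sub_apply, this]
      ring
    by_cases h : (i : ℕ) + r < n
    · rw [dif_pos h, hone]
      by_cases h2 : (i : ℕ) + (r + 1) < n
      · rw [dif_pos h2]
        have : (i : ℕ) + r + 1 < n := by omega
        rw [dif_pos this]
        exact congrArg x (Fin.ext (by simp; omega))
      · have : ¬ ((i : ℕ) + r + 1 < n) := by omega
        rw [dif_neg this, dif_neg h2]
    · have h2 : ¬ ((i : ℕ) + (r + 1) < n) := by omega
      rw [dif_neg h, dif_neg h2]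

/-- The identity `g^{a,r} ∘ g^{a+r,-r} = (1 - t)^{|r|}`, as an endomorphism of `L^{a+r}`,
stated for both signs of `r` (for `r ≤ 0` write `r = -s` and `b = a + r`, so that the
identity reads `g^{b+s,-s} ∘ g^{b,s} = (1 - t)^s` on `L^b`). -/
theorem stmt6 (k : Type*) [Field k] :
    (∀ a r : ℕ,
      (inclL k a (a + r)) ∘ₗ (collL k (a + r) a (Nat.le_add_right a r)) =
        (1 - tAct k (a + r)) ^ r) ∧
    (∀ b s : ℕ,
      (collL k (b + s) b (Nat.le_add_right b s)) ∘ₗ (inclL k b (b + s)) =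
        (1 - tAct k b) ^ s) := by
  constructor
  · intro a r
    apply LinearMap.ext; intro x; funext i
    rw [shift_pow]
    simp only [LinearMap.comp_apply, inclL, collL, LinearMap.coe_mk, AddHom.coe_mk,
      LinearMap.funLeft_apply]
    by_cases h : (i : ℕ) < a
    · rw [dif_pos h]
      have h2 : (i : ℕ) + r < a + r := by omega
      rw [dif_pos h2]
      congr 1
      ext
      simp
      omega
    · rw [dif_neg h]
      have h2 : ¬ ((i : ℕ) + r < a + r) := by omega
      rw [dif_neg h2]
  · intro b s
    apply LinearMap.ext; intro x; funext i
    rw [shift_pow]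
    simp only [LinearMap.comp_apply, inclL, collL, LinearMap.coe_mk, AddHom.coe_mk,
      LinearMap.funLeft_apply]
    by_cases h : (i : ℕ) + s < b
    · have h2 : (b + s - b + (i : ℕ)) < b := by omega
      rw [dif_pos h2, dif_pos h]
      congr 1
      ext
      simp
      omega
    · have h2 : ¬ ((b + s - b + (i : ℕ)) < b) := by omega
      rw [dif_neg h2, dif_neg h]
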